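/- Every finite convex geometry containing the empty set is the join of upset convexities of finitely many linear orders: if 𝒞 is a convex geometry on a finite set W with ∅ ∈ 𝒞, then there exist linear orders ≤_1, …, ≤_m on W such that 𝒞 = {C_1 ∩ ⋯ ∩ C_m : C_j upward closed in ≤_j}. -/

import Mathlib

open Set

def interClosed {W : Type*} (𝒞 : Set (Set W)) : Prop := ∀ 𝒳 ⊆ 𝒞, ⋂₀ 𝒳 ∈ 𝒞

def antiExchange {W : Type*} (𝒞 : Set (Set W)) : Prop :=
  ∀ C ∈ 𝒞, ∀ x y : W, x ∉ C → y ∉ C → x ≠ y →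
    ∃ D ∈ 𝒞, C ⊆ D ∧ ((x ∈ D ∧ y ∉ D) ∨ (x ∉ D ∧ y ∈ D))

def hullOf {W : Type*} (𝒞 : Set (Set W)) (X : Set W) : Set W := ⋂₀ {C | C ∈ 𝒞 ∧ X ⊆ C}

def exOf {W : Type*} (𝒞 : Set (Set W)) (X : Set W) : Set W :=
  {x | x ∈ X ∧ x ∉ hullOf 𝒞 (X \ {x})}

lemma inter_mem {W : Type*} {𝒞 : Set (Set W)} (hI : interClosed 𝒞)
    {A B : Set W} (hA : A ∈ 𝒞) (hB : B ∈ 𝒞) : A ∩ B ∈ 𝒞 := by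
  have := hI {A, B} (by intro X hX; rcases hX with rfl | rfl <;> assumption)
  simpa [Set.sInter_pair] using this

lemma univ_mem {W : Type*} {𝒞 : Set (Set W)} (hI : interClosed 𝒞) : (univ : Set W) ∈ 𝒞 := by
  have := hI ∅ (empty_subset _)
  simpa using this

lemma step_lemma {W : Type*} [Finite W] {𝒞 : Set (Set W)}
    (hI : interClosed 𝒞) (hAE : antiExchange 𝒞) {A B : Set W}
    (hA : A ∈ 𝒞) (hB : B ∈ 𝒞) (hAB : A ⊆ B) (hne : A ≠ B) :
    ∃ D ∈ 𝒞, A ⊆ D ∧ D ⊆ B ∧ D ≠ B ∧ (B \ D).Subsingleton := by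
  classical
  set S : Set (Set W) := {D | D ∈ 𝒞 ∧ A ⊆ D ∧ D ⊆ B ∧ D ≠ B} with hS
  have hSne : S.Nonempty := ⟨A, hA, subset_rfl, hAB, hne⟩
  have hSfin : S.Finite := Set.toFinite S
  obtain ⟨D, hD, hmax⟩ : ∃ D ∈ S, ∀ D' ∈ S, id D ≤ id D' → id D = id D' := by
    obtain ⟨D, hD, hm⟩ := hSfin.exists_maximalFor id S hSne
    exact ⟨D, hD, fun D' h1 h2 => le_antisymm h2 (hm h1 h2)⟩
  refine ⟨D, hD.1, hD.2.1, hD.2.2.1, hD.2.2.2, ?_⟩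
  intro x hx y hy
  by_contra hxy
  obtain ⟨E, hE, hDE, hsep⟩ := hAE D hD.1 x y hx.2 hy.2 hxy
  have key : ∀ u v : W, u ∈ B \ D → v ∈ B \ D → u ∈ E → v ∉ E → False := by
    intro u v hu hv huE hvE
    have hmem : E ∩ B ∈ S := by
      refine ⟨inter_mem hI hE hB, hD.2.1.trans (subset_inter hDE hD.2.2.1), inter_subset_right, ?_⟩
      intro h
      have : v ∈ E ∩ B := h.symm ▸ hv.1
      exact hvE this.1
    have hsub : D ⊆ E ∩ B := subset_inter hDE hD.2.2.1
    have heq : D = E ∩ B := hmax _ hmem hsub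
    have : u ∈ E ∩ B := ⟨huE, hu.1⟩
    exact hu.2 (heq ▸ this)
  rcases hsep with ⟨hxE, hyE⟩ | ⟨hxE, hyE⟩
  · exact key x y hx hy hxE hyE
  · exact key y x hy hx hyE hxE

lemma chain_lemma {W : Type*} [Finite W] {𝒞 : Set (Set W)}
    (hI : interClosed 𝒞) (hAE : antiExchange 𝒞) :
    ∀ n : ℕ, ∀ A B : Set W, A ∈ 𝒞 → B ∈ 𝒞 → A ⊆ B → (B \ A).ncard = n →
    ∃ (f : ℕ → Set W) (k : ℕ), f 0 = A ∧ (∀ i, f i ∈ 𝒞) ∧ (∀ i, f i ⊆ f (i+1)) ∧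
      (∀ i, (f (i+1) \ f i).Subsingleton) ∧ (∀ i, k ≤ i → f i = B) := by
  intro n
  induction n using Nat.strong_induction_on with
  | _ n ih =>
    intro A B hA hB hAB hcard
    by_cases hne : A = B
    · exact ⟨fun _ => B, 0, hne.symm, fun _ => hB, fun _ => subset_rfl,
        fun i => by simp [Set.Subsingleton], fun i _ => rfl⟩
    · obtain ⟨D, hD, hAD, hDB, hDneB, hss⟩ := step_lemma hI hAE hA hB hAB hne
      have hfin : (B \ A).Finite := Set.toFinite _
      have hlt : (D \ A).ncard < n := by
        rw [← hcard]
        apply Set.ncard_lt_ncard _ hfin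
        constructor
        · exact diff_subset_diff_left hDB
        · intro hsub
          obtain ⟨b, hbB, hbD⟩ := Set.diff_nonempty.mpr
            (fun h => hDneB (le_antisymm hDB h))
          exact hbD (hsub ⟨hbB, fun hbA => hbD (hAD hbA)⟩).1
      obtain ⟨f, k, hf0, hfC, hfmono, hfss, hfk⟩ := ih _ hlt A D hA hD hAD rfl
      have hmono2 : ∀ i j, i ≤ j → f i ⊆ f j := fun i j hij =>
        monotone_nat_of_le_succ hfmono hij
      refine ⟨fun i => if i ≤ k then f i else B, k + 1, ?_, ?_, ?_, ?_, ?_⟩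
      · simp [hf0]
      · intro i; by_cases h : i ≤ k <;> simp [h, hfC, hB]
      · intro i
        by_cases h : i + 1 ≤ k
        · simp only [h, Nat.le_of_succ_le h, if_true]; exact hfmono i
        · by_cases h' : i ≤ k
          · simp only [h, h', if_true, if_false]
            exact (hmono2 i k h').trans ((hfk k le_rfl).le.trans hDB)
          · simp [h, h']
      · intro i
        by_cases h : i + 1 ≤ k
        · simpa only [h, Nat.le_of_succ_le h, if_true] using hfss i
        · by_cases h' : i ≤ k
          · have hik : i = k := by omega
            subst hik
            simpa [hfk i le_rfl] using hss
          · simp [h, h', Set.Subsingleton]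
      · intro i hi
        have : ¬ i ≤ k := by omega
        simp [this]

lemma order_lemma {W : Type*} [Finite W] {𝒞 : Set (Set W)}
    (hI : interClosed 𝒞) (hAE : antiExchange 𝒞) (hempty : ∅ ∈ 𝒞)
    {Cset : Set W} (hC : Cset ∈ 𝒞) :
    ∃ le : W → W → Prop, IsLinearOrder W le ∧
      (∀ x ∈ Cset, ∀ y, le x y → y ∈ Cset) ∧
      (∀ U : Set W, (∀ x ∈ U, ∀ y, le x y → y ∈ U) → U ∈ 𝒞) := by
  classical
  obtain ⟨f, k1, hf0, hfC, hfmono, hfss, hfk⟩ :=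
    chain_lemma hI hAE _ ∅ Cset hempty hC (empty_subset _) rfl
  obtain ⟨g, k2, hg0, hgC, hgmono, hgss, hgk⟩ :=
    chain_lemma hI hAE _ Cset univ hC (univ_mem hI) (subset_univ _) rfl
  set F : ℕ → Set W := fun i => if i ≤ k1 then f i else g (i - k1) with hF
  have hF0 : F 0 = ∅ := by simp [hF, hf0]
  have hFk1 : F k1 = Cset := by simp [hF, hfk k1 le_rfl]
  have hFC : ∀ i, F i ∈ 𝒞 := by
    intro i; by_cases h : i ≤ k1 <;> simp [hF, h, hfC, hgC]
  have hFmono : ∀ i, F i ⊆ F (i+1) := by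
    intro i
    by_cases h : i + 1 ≤ k1
    · simp only [hF, h, Nat.le_of_succ_le h, if_true]; exact hfmono i
    · by_cases h' : i ≤ k1
      · have : i = k1 := by omega
        subst this
        simp only [hF, h, h', if_true, if_false, hfk i le_rfl]
        have : i + 1 - i = 1 := by omega
        rw [this, ← hg0]
        exact hgmono 0
      · simp only [hF, h, h', if_false]
        have : i + 1 - k1 = (i - k1) + 1 := by omega
        rw [this]; exact hgmono _
  have hFss : ∀ i, (F (i+1) \ F i).Subsingleton := by
    intro i
    by_cases h : i + 1 ≤ k1
    · simpa only [hF, h, Nat.le_of_succ_le h, if_true] using hfss i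
    · by_cases h' : i ≤ k1
      · have : i = k1 := by omega
        subst this
        have h1 : i + 1 - i = 1 := by omega
        simpa only [hF, h, h', if_true, if_false, hfk i le_rfl, h1, ← hg0] using hgss 0
      · have : i + 1 - k1 = (i - k1) + 1 := by omega
        simpa only [hF, h, h', if_false, this] using hgss _
  have hFuniv : ∀ i, k1 + k2 ≤ i → F i = univ := by
    intro i hi
    by_cases h : i ≤ k1
    · have : k2 = 0 ∧ i = k1 + k2 := by omega
      simp only [hF, h, if_true]
      rw [this.2, this.1, Nat.add_zero, hfk k1 le_rfl, ← hg0, hgk 0 (this.1.le.trans (le_refl 0))]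
    · simp only [hF, h, if_false]
      exact hgk _ (by omega)
  have hFmono2 : ∀ i j, i ≤ j → F i ⊆ F j := fun i j hij =>
    monotone_nat_of_le_succ hFmono hij
  have hex : ∀ x : W, ∃ i, x ∈ F i := fun x => ⟨k1 + k2, by simp [hFuniv _ le_rfl]⟩
  set r : W → ℕ := fun x => Nat.find (hex x) with hr
  have hrF : ∀ t, {x | r x ≤ t} = F t := by
    intro t
    ext x
    constructor
    · intro hx
      exact hFmono2 _ _ hx (Nat.find_spec (hex x))
    · intro hx
      exact Nat.find_min' (hex x) hx
  have hrinj : Function.Injective r := by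
    intro x y hxy
    have hx : x ∈ F (r x) := Nat.find_spec (hex x)
    have hy : y ∈ F (r y) := Nat.find_spec (hex y)
    have hmin : ∀ z : W, ∀ i, z ∈ F i → r z ≤ i := fun z i h => Nat.find_min' (hex z) h
    rcases Nat.eq_zero_or_pos (r x) with h0 | hpos
    · rw [h0, hF0] at hx; exact absurd hx (notMem_empty x)
    obtain ⟨i, hi⟩ : ∃ i, r x = i + 1 := ⟨r x - 1, by omega⟩
    have hxi : x ∉ F i := fun h => by have := hmin x i h; omega
    have hyi : y ∉ F i := fun h => by have := hmin y i h; omega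
    refine hFss i ⟨?_, hxi⟩ ⟨?_, hyi⟩
    · rw [← hi]; exact hx
    · rw [hxy] at hi; rw [← hi]; exact hy
  refine ⟨fun x y => r y ≤ r x, ?_, ?_, ?_⟩
  · exact { refl := fun a => le_refl _,
            trans := fun a b c h1 h2 => le_trans h2 h1,
            antisymm := fun a b h1 h2 => hrinj (le_antisymm h2 h1),
            total := fun a b => le_total (r b) (r a) }
  · intro x hx y hxy
    have : x ∈ {z | r z ≤ k1} := by rw [hrF k1, hFk1]; exact hx
    have : y ∈ {z | r z ≤ k1} := le_trans hxy this
    rw [hrF k1, hFk1] at this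
    exact this
  · intro U hU
    rcases U.eq_empty_or_nonempty with rfl | ⟨x0, hx0⟩
    · exact hempty
    obtain ⟨b, hb, hbmax⟩ : ∃ b ∈ U, ∀ b' ∈ U, r b ≤ r b' → r b = r b' := by
      obtain ⟨b, hb, hm⟩ := (Set.toFinite U).exists_maximalFor r U ⟨x0, hx0⟩
      exact ⟨b, hb, fun b' h1 h2 => le_antisymm h2 (hm h1 h2)⟩
    have : U = F (r b) := by
      rw [← hrF]
      ext y
      simp only [mem_setOf_eq]
      constructor
      · intro hy
        by_contra h
        push_neg at h
        have := hbmax y hy h.le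
        omega
      · intro hy
        exact hU b hb y hy
    rw [this]
    exact hFC _

theorem decomposition_into_linear_orders {W : Type*} [Finite W] (𝒞 : Set (Set W))
    (hI : interClosed 𝒞) (hAE : antiExchange 𝒞) (hempty : ∅ ∈ 𝒞) :
    ∃ (m : ℕ) (le : Fin m → W → W → Prop), (∀ j, IsLinearOrder W (le j)) ∧
      𝒞 = {X : Set W | ∃ C : Fin m → Set W,
        (∀ j, ∀ x ∈ C j, ∀ y, le j x y → y ∈ C j) ∧ X = ⋂ j, C j} := by
  classical
  have hfin : Finite ↥𝒞 := Set.Finite.to_subtype (Set.toFinite 𝒞)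
  obtain ⟨m, ⟨e⟩⟩ := Finite.exists_equiv_fin ↥𝒞
  choose le hlin hup hmem using fun c : ↥𝒞 => order_lemma hI hAE hempty c.2
  refine ⟨m, fun j => le (e.symm j), fun j => hlin _, ?_⟩
  ext X
  simp only [mem_setOf_eq]
  constructor
  · intro hX
    refine ⟨fun j => if j = e ⟨X, hX⟩ then X else univ, ?_, ?_⟩
    · intro j x hx y hxy
      by_cases h : j = e ⟨X, hX⟩
      · subst h
        simp only [if_pos rfl] at hx ⊢
        rw [Equiv.symm_apply_apply] at hxy
        exact hup ⟨X, hX⟩ x hx y hxy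
      · simp [h]
    · ext x
      simp only [mem_iInter]
      constructor
      · intro hx j
        by_cases h : j = e ⟨X, hX⟩ <;> simp [h, hx]
      · intro hx
        have := hx (e ⟨X, hX⟩)
        simpa using this
  · rintro ⟨C, hCup, rfl⟩
    rw [← Set.sInter_range C]
    apply hI
    rintro _ ⟨j, rfl⟩
    exact hmem (e.symm j) (C j) (hCup j)
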